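/- Let C(k, M−k) be a Christoffel word with k even, and let φ be the map sending every 1 to 2 and every even-numbered occurrence of 0 to 1. Then the circular word [φ(C(k, M−k))] has abelian complexity exactly 3 for every length n with 1 ≤ n ≤ M−1. -/

import Mathlib

/-- Two words are conjugate (cyclic rotations of each other). -/
def Conj {α : Type*} (w w' : List α) : Prop := ∃ x y : List α, w = x ++ y ∧ w' = y ++ x

/-- `u` is a factor of the circular word `[w]`. -/
def CFactor {α : Type*} (u w : List α) : Prop := ∃ w' : List α, Conj w w' ∧ u <:+: w'

/-- A (linear) word is balanced. -/
def WordIsBalanced {α : Type*} [DecidableEq α] (w : List α) : Prop :=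
  ∀ u v : List α, u <:+: w → v <:+: w → u.length = v.length →
    ∀ a : α, ((u.count a : ℤ) - v.count a) ∈ ({-1, 0, 1} : Set ℤ)

/-- A circular word is balanced. -/
def CircBalanced {α : Type*} [DecidableEq α] (w : List α) : Prop :=
  ∀ u v : List α, CFactor u w → CFactor v w → u.length = v.length →
    ∀ a : α, ((u.count a : ℤ) - v.count a) ∈ ({-1, 0, 1} : Set ℤ)

/-- The n-spectrum of a circular word: Parikh vectors of its length-n factors. -/
def circSpec {α : Type*} [DecidableEq α] (n : ℕ) (w : List α) : Set (α → ℕ) :=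
  {p | ∃ u : List α, CFactor u w ∧ u.length = n ∧ (fun a => u.count a) = p}

/-- Abelian complexity of a circular word. -/
noncomputable def circAb {α : Type*} [DecidableEq α] (n : ℕ) (w : List α) : ℕ :=
  (circSpec n w).ncard

/-- A word is primitive if it is not a proper power. -/
def Primitive {α : Type*} (w : List α) : Prop :=
  ∀ (u : List α) (q : ℕ), 2 ≤ q → w ≠ (List.replicate q u).flatten

/-- The lower Christoffel word `C(k, M-k)` of length `M` with `k` zeros. -/
def christoffel (k M : ℕ) : List (Fin 2) :=
  (List.range M).map (fun i => if i * (M - k) / M < (i + 1) * (M - k) / M then 1 else 0)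

/-- Auxiliary scan for `phi`: the Boolean records whether the next occurrence
of `0` is odd-numbered. -/
def phiAux : Bool → List (Fin 2) → List (Fin 3)
  | _, [] => []
  | b, a :: t =>
    if a = 0 then (if b then (0 : Fin 3) else 1) :: phiAux (!b) t
    else (2 : Fin 3) :: phiAux b t

/-- `phi` replaces each `1` by `2` and each even-numbered occurrence of `0` by `1`. -/
def phi (w : List (Fin 2)) : List (Fin 3) := phiAux true w
/-! ### Auxiliary lemmas -/

lemma phiAux_length (b : Bool) (w : List (Fin 2)) : (phiAux b w).length = w.length := by
  induction w generalizing b with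
  | nil => rfl
  | cons a t ih => by_cases h : a = 0 <;> simp [phiAux, h, ih]

lemma phiAux_take (b : Bool) (w : List (Fin 2)) (j : ℕ) :
    (phiAux b w).take j = phiAux b (w.take j) := by
  induction w generalizing b j with
  | nil => simp [phiAux]
  | cons a t ih =>
    cases j with
    | zero => simp [phiAux]
    | succ j => by_cases h : a = 0 <;> simp [phiAux, h, ih]

lemma phiAux_count (b : Bool) (w : List (Fin 2)) :
    (phiAux b w).count 2 = w.count 1 ∧
    (phiAux b w).count 0 = (if b then w.count 0 + 1 else w.count 0) / 2 ∧
    (phiAux b w).count 1 = (if b then w.count 0 else w.count 0 + 1) / 2 := by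
  induction w generalizing b with
  | nil => cases b <;> simp [phiAux]
  | cons a t ih =>
    obtain ⟨ih2, ih0, ih1⟩ := ih b
    obtain ⟨jh2, jh0, jh1⟩ := ih (!b)
    have ha : a = 0 ∨ a = 1 := by fin_cases a <;> simp
    rcases ha with ha | ha <;> cases b <;>
      simp_all [phiAux, List.count_cons] <;> omega

lemma phiAux_append (b : Bool) (x y : List (Fin 2)) :
    phiAux b (x ++ y) = phiAux b x ++ phiAux (if Even (x.count 0) then b else !b) y := by
  induction x generalizing b with
  | nil => simp [phiAux]
  | cons a t ih =>
    by_cases h : a = 0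
    · have : phiAux b ((a :: t) ++ y) = (if b then (0:Fin 3) else 1) :: phiAux (!b) (t ++ y) := by
        simp [phiAux, h]
      rw [this, ih (!b)]
      have h2 : phiAux b (a :: t) = (if b then (0:Fin 3) else 1) :: phiAux (!b) t := by
        simp [phiAux, h]
      rw [h2]
      have hc : (a :: t).count 0 = t.count 0 + 1 := by simp [List.count_cons, h]
      rw [hc]
      rcases Nat.even_or_odd (t.count 0) with he | ho
      · simp [he, Nat.even_add_one, Nat.not_even_iff_odd, Nat.not_odd_iff_even.mpr he]
      · simp [ho, Nat.even_add_one, Nat.not_even_iff_odd, Nat.not_even_iff_odd.mpr ho]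
    · have : phiAux b ((a :: t) ++ y) = (2:Fin 3) :: phiAux b (t ++ y) := by simp [phiAux, h]
      rw [this, ih b]
      have h2 : phiAux b (a :: t) = (2:Fin 3) :: phiAux b t := by simp [phiAux, h]
      rw [h2]
      have hc : (a :: t).count 0 = t.count 0 := by simp [List.count_cons, h]
      rw [hc]
      simp

lemma christoffel_length (k M : ℕ) : (christoffel k M).length = M := by
  simp [christoffel]

lemma chris_range_count (k M : ℕ) (hkM : k < M) (j : ℕ) :
    ((List.range j).map (fun i => if i * (M - k) / M < (i + 1) * (M - k) / M then (1 : Fin 2) else 0)).count 1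
      = j * (M - k) / M ∧
    ((List.range j).map (fun i => if i * (M - k) / M < (i + 1) * (M - k) / M then (1 : Fin 2) else 0)).count 0
      = j - j * (M - k) / M := by
  set d := M - k with hd
  have hdM : d ≤ M := by omega
  induction j with
  | zero => simp
  | succ j ih =>
    obtain ⟨ih1, ih0⟩ := ih
    rw [List.range_succ, List.map_append]
    have hmono : j * d / M ≤ (j + 1) * d / M :=
      Nat.div_le_div_right (Nat.mul_le_mul_right d (by omega))
    have hstep : (j + 1) * d / M ≤ j * d / M + 1 := by
      have h1 : (j + 1) * d = j * d + d := by ring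
      have h2 : (j * d + d) / M ≤ (j * d + M) / M := Nat.div_le_div_right (by omega)
      have h3 : (j * d + M) / M = j * d / M + 1 := Nat.add_div_right _ (by omega)
      rw [h1]
      omega
    have hle : j * d / M ≤ j := by
      calc j * d / M ≤ j * M / M := Nat.div_le_div_right (Nat.mul_le_mul_left j (by omega))
      _ = j := Nat.mul_div_cancel j (by omega)
    by_cases hc : j * d / M < (j + 1) * d / M
    · simp only [List.count_append, ih1, ih0, hc, if_pos, List.map_cons, List.map_nil]
      constructor
      · simp; omega
      · simp; omega
    · simp only [List.count_append, ih1, ih0, hc, if_neg, List.map_cons, List.map_nil]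
      constructor
      · simp; omega
      · simp; omega

lemma chris_take_count (k M : ℕ) (hkM : k < M) (j : ℕ) (hj : j ≤ M) :
    ((christoffel k M).take j).count 1 = j * (M - k) / M ∧
    ((christoffel k M).take j).count 0 = j - j * (M - k) / M := by
  have : (christoffel k M).take j
      = (List.range j).map (fun i => if i * (M - k) / M < (i + 1) * (M - k) / M then (1:Fin 2) else 0) := by
    rw [christoffel, ← List.map_take, List.take_range, Nat.min_eq_left hj]
  rw [this]
  exact chris_range_count k M hkM j

lemma chris_double_count {k M : ℕ} (hk : 0 < k) (hkM : k < M)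
    (j : ℕ) (hj : j ≤ 2 * M) :
    ((christoffel k M ++ christoffel k M).take j).count 1 = j * (M - k) / M ∧
    ((christoffel k M ++ christoffel k M).take j).count 0 = j - j * (M - k) / M := by
  have hcnt := chris_take_count k M hkM
  set w := christoffel k M with hw
  have hlen : w.length = M := christoffel_length k M
  set d := M - k with hd
  have hM0 : 0 < M := by omega
  rcases le_or_gt j M with h | h
  · have : (w ++ w).take j = w.take j := by
      rw [List.take_append]
      have : j - w.length = 0 := by omega
      simp [this]
    rw [this]; exact hcnt j h
  · have hwt : (w ++ w).take j = w ++ w.take (j - M) := by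
      rw [List.take_append]
      congr 1
      · exact List.take_of_length_le (by omega)
      · rw [hlen]
    have hww : w.count 1 = d ∧ w.count 0 = M - d := by
      have := hcnt M le_rfl
      rwa [List.take_of_length_le (by omega), Nat.mul_div_cancel_left d hM0] at this
    have hsub := hcnt (j - M) (by omega)
    have hdiv : j * d / M = d + (j - M) * d / M := by
      have h1 : j * d = (j - M) * d + M * d := by
        have h0 : (j - M) + M = j := by omega
        calc j * d = ((j - M) + M) * d := by rw [h0]
        _ = (j - M) * d + M * d := by ring
      rw [h1, Nat.add_mul_div_left _ _ hM0]
      omega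
    have hdle : ∀ i : ℕ, i * d / M ≤ i := by
      intro i
      calc i * d / M ≤ i * M / M := Nat.div_le_div_right (Nat.mul_le_mul_left i (by omega))
      _ = i := Nat.mul_div_cancel i hM0
    have h2 := hdle (j - M)
    rw [hwt, List.count_append, List.count_append, hww.1, hww.2, hsub.1, hsub.2, hdiv]
    constructor
    · ring
    · omega

lemma window_count {α : Type*} [DecidableEq α] (v : List α) (s n : ℕ)
    (hs : s ≤ v.length) (hn : n ≤ v.length) (c : α) :
    ((v.rotate s).take n).count c + ((v ++ v).take s).count c
      = ((v ++ v).take (s + n)).count c := by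
  have h1 : (v ++ v).take (s + n) = (v ++ v).take s ++ ((v ++ v).drop s).take n := by
    rw [← List.take_add]
  have h2 : ((v ++ v).drop s).take n = (v.rotate s).take n := by
    rw [List.rotate_eq_drop_append_take hs]
    rw [List.drop_append]
    have hz : s - v.length = 0 := by omega
    rw [hz, List.drop_zero]
    rw [List.take_append, List.take_append]
    congr 1
    rw [List.take_take]
    congr 1
    have : (v.drop s).length = v.length - s := by simp
    rw [this]
    omega
  rw [h1, h2, List.count_append]
  ring

lemma spec_mem_iff {α : Type*} [DecidableEq α] (v : List α) (n : ℕ)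
    (hn : n ≤ v.length) (hv : v ≠ []) (p : α → ℕ) :
    p ∈ circSpec n v ↔ ∃ s < v.length, (fun a => ((v.rotate s).take n).count a) = p := by
  constructor
  · rintro ⟨u, ⟨w', ⟨x, y, hxy, hw'⟩, hinf⟩, hlen, hp⟩
    obtain ⟨l, r, hlr⟩ := hinf
    have hxle : x.length ≤ v.length := by rw [hxy]; simp
    have hrot1 : v.rotate x.length = y ++ x := by
      rw [List.rotate_eq_drop_append_take hxle, hxy]
      simp
    have hlle : l.length ≤ w'.length := by rw [← hlr]; simp
    have hrot2 : w'.rotate l.length = u ++ (r ++ l) := by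
      rw [List.rotate_eq_drop_append_take hlle, ← hlr]
      simp
    have hu : u = (v.rotate (x.length + l.length)).take n := by
      rw [← List.rotate_rotate, hrot1, ← hw', hrot2, ← hlen, List.take_left]
    refine ⟨(x.length + l.length) % v.length,
      Nat.mod_lt _ (by simpa using List.length_pos_iff.mpr hv), ?_⟩
    rw [List.rotate_mod, ← hu]
    exact hp
  · rintro ⟨s, hs, hp⟩
    refine ⟨(v.rotate s).take n, ⟨v.rotate s, ⟨v.take s, v.drop s, ?_, ?_⟩, ?_⟩, ?_, hp⟩
    · rw [List.take_append_drop]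
    · rw [List.rotate_eq_drop_append_take hs.le]
    · exact (List.take_prefix _ _).isInfix
    · rw [List.length_take, List.length_rotate]
      omega

lemma Zsum (k M j q r : ℕ) (hkM : k < M) (hjk : j * k = M * q + r) (hr : r < M) :
    j * (M - k) / M + (q + (if r = 0 then 0 else 1)) = j := by
  have hM0 : 0 < M := by omega
  have hqj : q ≤ j := by
    have h1 : M * q ≤ j * M := by
      calc M * q ≤ j * k := by omega
      _ ≤ j * M := Nat.mul_le_mul_left j (by omega)
    have h2 : j * M = M * j := by ring
    exact Nat.le_of_mul_le_mul_left (by omega) hM0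
  have hsum : j * (M - k) + j * k = j * M := by
    rw [← Nat.mul_add]
    congr 1
    omega
  set e := j - q with he
  have hje : j = q + e := by omega
  by_cases hr0 : r = 0
  · have hF : j * (M - k) = e * M := by
      have h1 : j * M = (q + e) * M := by rw [← hje]
      have h2 : (q + e) * M = q * M + e * M := by ring
      have h3 : q * M = M * q := by ring
      omega
    rw [hF, Nat.mul_div_cancel e hM0, if_pos hr0]
    omega
  · have he1 : 1 ≤ e := by
      rcases Nat.eq_zero_or_pos e with h | h
      · exfalso
        have hjq : j = q := by omega
        rw [hjq] at hjk
        have h1 : q * k < q * M := by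
          rcases Nat.eq_zero_or_pos q with hq | hq
          · simp [hq] at hjk; omega
          · exact Nat.mul_lt_mul_of_le_of_lt (le_refl q) (by omega) (by omega)
        have h2 : q * M = M * q := by ring
        omega
      · exact h
    have hF : j * (M - k) = (M - r) + M * (e - 1) := by
      have h1 : j * M = (q + e) * M := by rw [← hje]
      have h2 : (q + e) * M = q * M + e * M := by ring
      have h3 : q * M = M * q := by ring
      have h4 : e * M = (e - 1) * M + M := by
        have h0 : e = (e - 1) + 1 := by omega
        calc e * M = ((e - 1) + 1) * M := by rw [← h0]
        _ = (e - 1) * M + M := by ring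
      have h5 : (e - 1) * M = M * (e - 1) := by ring
      omega
    rw [hF, Nat.add_mul_div_left _ _ hM0, Nat.div_eq_of_lt (by omega), if_neg hr0]
    omega

lemma oddMc (k M u : ℕ) (hke : k % 2 = 0) (hu : k * u % M = 1) :
    M % 2 = 1 ∧ (k * u / M) % 2 = 1 ∧ k * u = M * (k * u / M) + 1 := by
  set c := k * u / M with hc
  have hdm : M * c + k * u % M = k * u := Nat.div_add_mod _ _
  rw [hu] at hdm
  have hku2 : (k * u) % 2 = 0 := by
    rw [Nat.mul_mod, hke]
    simp
  have hMc2 : (M * c) % 2 = (M % 2) * (c % 2) % 2 := Nat.mul_mod _ _ _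
  have hM2 : M % 2 = 0 ∨ M % 2 = 1 := by omega
  have hc2 : c % 2 = 0 ∨ c % 2 = 1 := by omega
  rcases hM2 with h | h <;> rcases hc2 with h' | h' <;> simp [h, h'] at hMc2 ⊢ <;> omega

lemma invpt (k M u rh : ℕ) (hke : k % 2 = 0) (hu : k * u % M = 1) (hr : rh < M) :
    ∃ s t, s < M ∧ s * k = M * t + rh ∧ t % 2 = rh % 2 := by
  obtain ⟨hModd, hcodd, hcu⟩ := oddMc k M u hke hu
  set c := k * u / M with hc
  set s := (rh * u) % M with hs
  set g := (rh * u) / M with hg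
  have hdm : M * g + s = rh * u := Nat.div_add_mod _ _
  have hsM : s < M := Nat.mod_lt _ (by omega)
  have key : s * k + M * (g * k) = M * (rh * c) + rh := by
    have h1 : (M * g + s) * k = rh * (u * k) := by
      rw [hdm]; ring
    have h2 : (M * g + s) * k = M * (g * k) + s * k := by ring
    have h3 : rh * (u * k) = rh * (k * u) := by ring
    have h4 : rh * (k * u) = rh * (M * c + 1) := by rw [← hcu]
    have h5 : rh * (M * c + 1) = M * (rh * c) + rh := by ring
    omega
  have hgk : g * k ≤ rh * c := by
    by_contra hcon
    push_neg at hcon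
    have h0 : rh * c + 1 ≤ g * k := hcon
    have h6 : M * (rh * c) + M ≤ M * (g * k) := by
      calc M * (rh * c) + M = M * (rh * c + 1) := by ring
      _ ≤ M * (g * k) := Nat.mul_le_mul_left M h0
    omega
  refine ⟨s, rh * c - g * k, hsM, ?_, ?_⟩
  · have h7 : M * (rh * c - g * k) + M * (g * k) = M * (rh * c) := by
      rw [← Nat.mul_add]
      congr 1
      omega
    omega
  · have h8 : (g * k) % 2 = 0 := by
      rw [Nat.mul_mod, hke]; simp
    have h9 : (rh * c) % 2 = rh % 2 := by
      rw [Nat.mul_mod, hcodd, Nat.mul_one]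
      omega
    omega

/-- vector helper -/
def vec3 (x y z : ℕ) : Fin 3 → ℕ := fun a => if a = 0 then x else if a = 1 then y else z

lemma veceq (u : List (Fin 3)) (x y z : ℕ) (h0 : u.count 0 = x) (h1 : u.count 1 = y)
    (h2 : u.count 2 = z) : (fun a => u.count a) = vec3 x y z := by
  funext a
  fin_cases a <;> simp [vec3, h0, h1, h2]

lemma vec3_inj {x y z x' y' z' : ℕ} (h : vec3 x y z = vec3 x' y' z') :
    x = x' ∧ y = y' ∧ z = z' := by
  refine ⟨?_, ?_, ?_⟩
  · have := congrFun h 0; simpa [vec3] using this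
  · have := congrFun h 1; simpa [vec3] using this
  · have := congrFun h 2; simpa [vec3] using this

set_option maxHeartbeats 1000000 in
lemma countsD_even (M n mq ρ s t r Fs Fsn X0 X1 X2 : ℕ)
 (hρ1 : 1 ≤ ρ) (hρM : ρ < M) (hmqn : mq < n) (hrM : r < M)
 (hFs : Fs + (t + (if r = 0 then 0 else 1)) = s)
 (hFsn : Fsn + (t + mq + (if M ≤ r + ρ then 1 else 0) + (if r + ρ = M then 0 else 1)) = s + n)
 (hc0 : X0 + (s - Fs + 1)/2 = (s + n - Fsn + 1)/2)
 (hc1 : X1 + (s - Fs)/2 = (s + n - Fsn)/2)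
 (hc2 : X2 + Fs = Fsn)
 (hmq2 : mq % 2 = 0) :
 (X0 = (mq+1)/2 ∧ X1 = mq/2 ∧ X2 = n - mq) ∨
 (X0 = (mq+2)/2 ∧ X1 = (mq+1)/2 ∧ X2 = n - (mq+1)) ∨
 (X0 = (mq+1)/2 ∧ X1 = (mq+2)/2 ∧ X2 = n - (mq+1)) := by
  split_ifs at hFs hFsn <;> omega

set_option maxHeartbeats 1000000 in
lemma countsD_odd (M n mq ρ s t r Fs Fsn X0 X1 X2 : ℕ)
 (hρ1 : 1 ≤ ρ) (hρM : ρ < M) (hmqn : mq < n) (hrM : r < M)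
 (hFs : Fs + (t + (if r = 0 then 0 else 1)) = s)
 (hFsn : Fsn + (t + mq + (if M ≤ r + ρ then 1 else 0) + (if r + ρ = M then 0 else 1)) = s + n)
 (hc0 : X0 + (s - Fs + 1)/2 = (s + n - Fsn + 1)/2)
 (hc1 : X1 + (s - Fs)/2 = (s + n - Fsn)/2)
 (hc2 : X2 + Fs = Fsn)
 (hmq2 : mq % 2 = 1) :
 (X0 = (mq+1)/2 ∧ X1 = mq/2 ∧ X2 = n - mq) ∨
 (X0 = (mq+2)/2 ∧ X1 = (mq+1)/2 ∧ X2 = n - (mq+1)) ∨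
 (X0 = mq/2 ∧ X1 = (mq+1)/2 ∧ X2 = n - mq) := by
  split_ifs at hFs hFsn <;> omega

set_option maxHeartbeats 1000000 in
lemma countsA1 (M n mq ρ s t Fs Fsn X0 X1 X2 : ℕ)
 (hρ1 : 1 ≤ ρ) (hρM : ρ < M) (hmqn : mq < n)
 (hFs : Fs + (t + 1) = s)
 (hFsn : Fsn + (t + mq + (if M ≤ 1 + ρ then 1 else 0) + (if 1 + ρ = M then 0 else 1)) = s + n)
 (hc0 : X0 + (s - Fs + 1)/2 = (s + n - Fsn + 1)/2)
 (hc1 : X1 + (s - Fs)/2 = (s + n - Fsn)/2)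
 (hc2 : X2 + Fs = Fsn)
 (htp : t % 2 = 1) :
 X0 = (mq+1)/2 ∧ X1 = mq/2 ∧ X2 = n - mq := by
  split_ifs at hFsn <;> omega

set_option maxHeartbeats 1000000 in
lemma countsA2 (M n mq ρ Fs Fsn X0 X1 X2 : ℕ)
 (hρ1 : 1 ≤ ρ) (hρM : ρ < M) (hmqn : mq < n)
 (hFs : Fs = 0)
 (hFsn : Fsn + (0 + mq + (if M ≤ 0 + ρ then 1 else 0) + (if 0 + ρ = M then 0 else 1)) = 0 + n)
 (hc0 : X0 + (0 - Fs + 1)/2 = (0 + n - Fsn + 1)/2)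
 (hc1 : X1 + (0 - Fs)/2 = (0 + n - Fsn)/2)
 (hc2 : X2 + Fs = Fsn) :
 X0 = (mq+2)/2 ∧ X1 = (mq+1)/2 ∧ X2 = n - (mq+1) := by
  split_ifs at hFsn <;> omega

set_option maxHeartbeats 1000000 in
lemma countsA3e (M n mq ρ s t Fs Fsn X0 X1 X2 : ℕ)
 (hρ2 : 2 ≤ ρ) (hρM : ρ < M) (hmqn : mq < n) (hM1 : 1 < M) (hModd : M % 2 = 1)
 (hFs : Fs + (t + (if M - 1 = 0 then 0 else 1)) = s)
 (hFsn : Fsn + (t + mq + (if M ≤ M - 1 + ρ then 1 else 0) + (if M - 1 + ρ = M then 0 else 1)) = s + n)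
 (hc0 : X0 + (s - Fs + 1)/2 = (s + n - Fsn + 1)/2)
 (hc1 : X1 + (s - Fs)/2 = (s + n - Fsn)/2)
 (hc2 : X2 + Fs = Fsn)
 (htp : t % 2 = (M - 1) % 2) (hmq2 : mq % 2 = 0) :
 X0 = (mq+1)/2 ∧ X1 = (mq+2)/2 ∧ X2 = n - (mq+1) := by
  split_ifs at hFs hFsn <;> omega

set_option maxHeartbeats 1000000 in
lemma countsA3o (M n mq ρ s t Fs Fsn X0 X1 X2 : ℕ)
 (hρ1 : 1 ≤ ρ) (hρle : ρ ≤ M - 2) (hρM : ρ < M) (hmqn : mq < n) (hM1 : 1 < M)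
 (hFs : Fs + (t + 1) = s)
 (hFsn : Fsn + (t + mq + (if M ≤ 2 + ρ then 1 else 0) + (if 2 + ρ = M then 0 else 1)) = s + n)
 (hc0 : X0 + (s - Fs + 1)/2 = (s + n - Fsn + 1)/2)
 (hc1 : X1 + (s - Fs)/2 = (s + n - Fsn)/2)
 (hc2 : X2 + Fs = Fsn)
 (htp : t % 2 = 0) (hmq2 : mq % 2 = 1) :
 X0 = mq/2 ∧ X1 = (mq+1)/2 ∧ X2 = n - mq := by
  split_ifs at hFsn <;> omega

theorem stmt_16 (k M : ℕ) (hk : 0 < k) (hkM : k < M)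
    (hcop : Nat.Coprime k (M - k)) (hke : Even k)
    (n : ℕ) (h1 : 1 ≤ n) (h2 : n ≤ M - 1) :
    circAb n (phi (christoffel k M)) = 3 := by
  have hM0 : 0 < M := by omega
  have hM1 : 1 < M := by omega
  have hke2 : k % 2 = 0 := Nat.even_iff.mp hke
  set w := christoffel k M with hw
  set v := phi w with hv
  have hwlen : w.length = M := christoffel_length k M
  have hvlen : v.length = M := by
    rw [hv, phi, phiAux_length, hwlen]
  have hvne : v ≠ [] := by
    intro h
    rw [h] at hvlen
    simp at hvlen
    omega
  -- coprimality with M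
  have hcopM : Nat.Coprime k M := by
    have h0 : Nat.Coprime k ((M - k) + k) := Nat.coprime_add_self_right.mpr hcop
    have h1 : (M - k) + k = M := by omega
    rwa [h1] at h0
  obtain ⟨u, hu⟩ : ∃ u, k * u % M = 1 :=
    by obtain ⟨m, -, hm⟩ := Nat.exists_mul_mod_eq_one_of_coprime hcopM hM1; exact ⟨m, hm⟩
  obtain ⟨hModd, hcodd, hcu⟩ := oddMc k M u hke2 hu
  -- m and rho
  set mq := n * k / M with hmq
  set ρ := n * k % M with hρ
  have hnk : n * k = M * mq + ρ := (Nat.div_add_mod _ _).symm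
  have hρM : ρ < M := Nat.mod_lt _ hM0
  have hρ1 : 1 ≤ ρ := by
    rcases Nat.eq_zero_or_pos ρ with h | h
    · exfalso
      have hdvd : M ∣ n * k := by
        rw [hρ] at h
        exact Nat.dvd_of_mod_eq_zero h
      have hdn : M ∣ n := (Nat.Coprime.dvd_of_dvd_mul_right (hcopM.symm)) hdvd
      have := Nat.le_of_dvd (by omega) hdn
      omega
    · exact h
  have hmqn : mq < n := by
    have h3 : n * k < n * M := Nat.mul_lt_mul_of_le_of_lt (le_refl n) hkM (by omega)
    have h4 : n * M = M * n := by ring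
    have h5 : M * mq < M * n := by omega
    exact Nat.lt_of_mul_lt_mul_left h5
  -- parity relation between mq and rho
  have hpar : (mq + ρ) % 2 = 0 := by
    have h3 : (n * k) % 2 = 0 := by
      rw [Nat.mul_mod, hke2]; simp
    have h4 : (M * mq) % 2 = mq % 2 := by
      rw [Nat.mul_mod, hModd, Nat.one_mul]
      omega
    omega
  -- prefix counts of v ++ v
  have hvv : v ++ v = phiAux true (w ++ w) := by
    have hcnt0w : w.count 0 = k := by
      have h3 := chris_take_count k M hkM M le_rfl
      rw [← hw] at h3
      rw [List.take_of_length_le (le_of_eq hwlen), Nat.mul_div_cancel_left (M - k) hM0] at h3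
      have := h3.2
      omega
    rw [phiAux_append true w w, hcnt0w]
    have h5 : (if Even k then true else !true) = true := by simp [hke]
    rw [h5]
    rfl
  have hEcount : ∀ j ≤ 2 * M,
      ((v ++ v).take j).count 2 = j * (M - k) / M ∧
      ((v ++ v).take j).count 0 = (j - j * (M - k) / M + 1) / 2 ∧
      ((v ++ v).take j).count 1 = (j - j * (M - k) / M) / 2 := by
    intro j hj
    have hX : (v ++ v).take j = phiAux true ((w ++ w).take j) := by
      rw [hvv, phiAux_take]
    obtain ⟨c2, c0, c1⟩ := phiAux_count true ((w ++ w).take j)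
    have hD := chris_double_count hk hkM j hj
    rw [← hw] at hD
    rw [hX, c2, c0, c1, hD.1, hD.2]
    simp
  -- the key counting fact per rotation
  have key : ∀ s t r : ℕ, s < M → s * k = M * t + r → r < M →
      ∃ Fs Fsn : ℕ,
        Fs + (t + (if r = 0 then 0 else 1)) = s ∧
        Fsn + (t + mq + (if M ≤ r + ρ then 1 else 0) + (if r + ρ = M then 0 else 1)) = s + n ∧
        ((v.rotate s).take n).count 0 + (s - Fs + 1) / 2 = (s + n - Fsn + 1) / 2 ∧
        ((v.rotate s).take n).count 1 + (s - Fs) / 2 = (s + n - Fsn) / 2 ∧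
        ((v.rotate s).take n).count 2 + Fs = Fsn := by
    intro s t r hsM hst hr
    refine ⟨s * (M - k) / M, (s + n) * (M - k) / M, ?_, ?_, ?_, ?_, ?_⟩
    · exact Zsum k M s t r hkM hst hr
    · have hadd : (s + n) * k = s * k + n * k := by ring
      rcases lt_trichotomy (r + ρ) M with hc | hc | hc
      · have hdec : (s + n) * k = M * (t + mq) + (r + ρ) := by
          have : M * (t + mq) = M * t + M * mq := by ring
          omega
        have hZ := Zsum k M (s + n) (t + mq) (r + ρ) hkM hdec (by omega)
        split_ifs at hZ ⊢ <;> omega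
      · have hdec : (s + n) * k = M * (t + mq + 1) + 0 := by
          have : M * (t + mq + 1) = M * t + M * mq + M := by ring
          omega
        have hZ := Zsum k M (s + n) (t + mq + 1) 0 hkM hdec (by omega)
        split_ifs at hZ ⊢ <;> omega
      · have hdec : (s + n) * k = M * (t + mq + 1) + (r + ρ - M) := by
          have : M * (t + mq + 1) = M * t + M * mq + M := by ring
          omega
        have hZ := Zsum k M (s + n) (t + mq + 1) (r + ρ - M) hkM hdec (by omega)
        split_ifs at hZ ⊢ <;> omega
    all_goals {
      have hwc := window_count v s n (by omega) (by omega)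
      have hE1 := hEcount s (by omega)
      have hE2 := hEcount (s + n) (by omega)
      first
      | (have := hwc 0
         rw [hE1.2.1, hE2.2.1] at this
         exact this)
      | (have := hwc 1
         rw [hE1.2.2, hE2.2.2] at this
         exact this)
      | (have := hwc 2
         rw [hE1.1, hE2.1] at this
         exact this)
    }
  have hspec : ∀ p, p ∈ circSpec n v ↔
      ∃ s < M, (fun a => ((v.rotate s).take n).count a) = p := by
    intro p
    rw [spec_mem_iff v n (by omega) hvne]
    simp only [hvlen]
  have hone : circSpec n v =
      {vec3 ((mq+1)/2) (mq/2) (n - mq),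
       vec3 ((mq+2)/2) ((mq+1)/2) (n - (mq+1)),
       if mq % 2 = 0 then vec3 ((mq+1)/2) ((mq+2)/2) (n - (mq+1))
         else vec3 (mq/2) ((mq+1)/2) (n - mq)} := by
    ext p
    rw [hspec p]
    simp only [Set.mem_insert_iff, Set.mem_singleton_iff]
    constructor
    · rintro ⟨s, hsM, hp⟩
      have hst : s * k = M * (s * k / M) + s * k % M := (Nat.div_add_mod _ _).symm
      have hrM : s * k % M < M := Nat.mod_lt _ hM0
      obtain ⟨Fs, Fsn, hFs, hFsn, hc0, hc1, hc2⟩ := key s (s * k / M) (s * k % M) hsM hst hrM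
      rw [← hp]
      by_cases hmq2 : mq % 2 = 0
      · rw [if_pos hmq2]
        have hD : (((v.rotate s).take n).count 0 = (mq+1)/2 ∧
              ((v.rotate s).take n).count 1 = mq/2 ∧
              ((v.rotate s).take n).count 2 = n - mq) ∨
            (((v.rotate s).take n).count 0 = (mq+2)/2 ∧
              ((v.rotate s).take n).count 1 = (mq+1)/2 ∧
              ((v.rotate s).take n).count 2 = n - (mq+1)) ∨
            (((v.rotate s).take n).count 0 = (mq+1)/2 ∧
              ((v.rotate s).take n).count 1 = (mq+2)/2 ∧
              ((v.rotate s).take n).count 2 = n - (mq+1)) := by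
          exact countsD_even M n mq ρ s (s*k/M) (s*k%M) Fs Fsn _ _ _
            hρ1 hρM hmqn hrM hFs hFsn hc0 hc1 hc2 hmq2
        rcases hD with ⟨h0, h1, h2⟩ | ⟨h0, h1, h2⟩ | ⟨h0, h1, h2⟩
        · exact Or.inl (veceq _ _ _ _ h0 h1 h2)
        · exact Or.inr (Or.inl (veceq _ _ _ _ h0 h1 h2))
        · exact Or.inr (Or.inr (veceq _ _ _ _ h0 h1 h2))
      · rw [if_neg hmq2]
        have hD : (((v.rotate s).take n).count 0 = (mq+1)/2 ∧
              ((v.rotate s).take n).count 1 = mq/2 ∧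
              ((v.rotate s).take n).count 2 = n - mq) ∨
            (((v.rotate s).take n).count 0 = (mq+2)/2 ∧
              ((v.rotate s).take n).count 1 = (mq+1)/2 ∧
              ((v.rotate s).take n).count 2 = n - (mq+1)) ∨
            (((v.rotate s).take n).count 0 = mq/2 ∧
              ((v.rotate s).take n).count 1 = (mq+1)/2 ∧
              ((v.rotate s).take n).count 2 = n - mq) := by
          exact countsD_odd M n mq ρ s (s*k/M) (s*k%M) Fs Fsn _ _ _
            hρ1 hρM hmqn hrM hFs hFsn hc0 hc1 hc2 (by omega)
        rcases hD with ⟨h0, h1, h2⟩ | ⟨h0, h1, h2⟩ | ⟨h0, h1, h2⟩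
        · exact Or.inl (veceq _ _ _ _ h0 h1 h2)
        · exact Or.inr (Or.inl (veceq _ _ _ _ h0 h1 h2))
        · exact Or.inr (Or.inr (veceq _ _ _ _ h0 h1 h2))
    · intro hmem
      rcases hmem with hpe | hpe | hpe
      · -- p1 : use invpt with rh = 1
        obtain ⟨s, t, hsM, hst, htp⟩ := invpt k M u 1 hke2 hu (by omega)
        obtain ⟨Fs, Fsn, hFs, hFsn, hc0, hc1, hc2⟩ := key s t 1 hsM hst (by omega)
        refine ⟨s, hsM, ?_⟩
        rw [hpe]
        norm_num at hFs htp
        obtain ⟨h0, h1, h2⟩ := countsA1 M n mq ρ s t Fs Fsn _ _ _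
          hρ1 hρM hmqn hFs hFsn hc0 hc1 hc2 htp
        exact veceq _ _ _ _ h0 h1 h2
      · -- p2 : s = 0
        obtain ⟨Fs, Fsn, hFs, hFsn, hc0, hc1, hc2⟩ :=
          key 0 0 0 hM0 (by simp) hM0
        refine ⟨0, hM0, ?_⟩
        rw [hpe]
        norm_num at hFs
        obtain ⟨h0, h1, h2⟩ := countsA2 M n mq ρ Fs Fsn _ _ _
          hρ1 hρM hmqn hFs hFsn hc0 hc1 hc2
        exact veceq _ _ _ _ h0 h1 h2
      · by_cases hmq2 : mq % 2 = 0
        · rw [if_pos hmq2] at hpe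
          have hρ2 : 2 ≤ ρ := by omega
          obtain ⟨s, t, hsM, hst, htp⟩ := invpt k M u (M - 1) hke2 hu (by omega)
          obtain ⟨Fs, Fsn, hFs, hFsn, hc0, hc1, hc2⟩ := key s t (M - 1) hsM hst (by omega)
          refine ⟨s, hsM, ?_⟩
          rw [hpe]
          obtain ⟨h0, h1, h2⟩ := countsA3e M n mq ρ s t Fs Fsn _ _ _
            hρ2 hρM hmqn hM1 hModd hFs hFsn hc0 hc1 hc2 htp hmq2
          exact veceq _ _ _ _ h0 h1 h2
        · rw [if_neg hmq2] at hpe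
          have hρodd : ρ % 2 = 1 := by omega
          have hρle : ρ ≤ M - 2 := by omega
          obtain ⟨s, t, hsM, hst, htp⟩ := invpt k M u 2 hke2 hu (by omega)
          obtain ⟨Fs, Fsn, hFs, hFsn, hc0, hc1, hc2⟩ := key s t 2 hsM hst (by omega)
          refine ⟨s, hsM, ?_⟩
          rw [hpe]
          norm_num at hFs htp
          obtain ⟨h0, h1, h2⟩ := countsA3o M n mq ρ s t Fs Fsn _ _ _
            hρ1 hρle hρM hmqn hM1 hFs hFsn hc0 hc1 hc2 htp (by omega)
          exact veceq _ _ _ _ h0 h1 h2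
  rw [circAb, hone]
  have h12 : vec3 ((mq+1)/2) (mq/2) (n - mq) ≠ vec3 ((mq+2)/2) ((mq+1)/2) (n - (mq+1)) := by
    intro h
    obtain ⟨e1, e2, e3⟩ := vec3_inj h
    omega
  have h13 : vec3 ((mq+1)/2) (mq/2) (n - mq) ≠
      (if mq % 2 = 0 then vec3 ((mq+1)/2) ((mq+2)/2) (n - (mq+1))
        else vec3 (mq/2) ((mq+1)/2) (n - mq)) := by
    by_cases hmq2 : mq % 2 = 0 <;> [rw [if_pos hmq2]; rw [if_neg hmq2]] <;>
      · intro h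
        obtain ⟨e1, e2, e3⟩ := vec3_inj h
        omega
  have h23 : vec3 ((mq+2)/2) ((mq+1)/2) (n - (mq+1)) ≠
      (if mq % 2 = 0 then vec3 ((mq+1)/2) ((mq+2)/2) (n - (mq+1))
        else vec3 (mq/2) ((mq+1)/2) (n - mq)) := by
    by_cases hmq2 : mq % 2 = 0 <;> [rw [if_pos hmq2]; rw [if_neg hmq2]] <;>
      · intro h
        obtain ⟨e1, e2, e3⟩ := vec3_inj h
        omega
  rw [Set.ncard_insert_of_notMem
      (by simp only [Set.mem_insert_iff, Set.mem_singleton_iff]; push_neg; exact ⟨h12, h13⟩),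
    Set.ncard_insert_of_notMem (by simp only [Set.mem_singleton_iff]; exact h23),
    Set.ncard_singleton]
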